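/- Let q > 1 be real and N real with |N - (q+1)| ≤ 2√q and N > 0. Then both roots of the quadratic polynomial P(T) = (1 + N/(q²-1)) + (-2 + (2q-3)N/(q-1) + N²/(q²-1))·T + (1 + N/(q²-1))·q³T² are complex (non-real), i.e. its discriminant is strictly negative. -/

import Mathlib

/-- RH for the rank 3 zeta: the discriminant of the quadratic numerator is negative. -/
theorem stmt_1 (q N : ℝ) (hq : 1 < q) (hN0 : 0 < N)
    (hN : |N - (q + 1)| ≤ 2 * Real.sqrt q) :
    (-2 + (2 * q - 3) * N / (q - 1) + N ^ 2 / (q ^ 2 - 1)) ^ 2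
      - 4 * (1 + N / (q ^ 2 - 1)) ^ 2 * q ^ 3 < 0 := by
  have hq0 : (0:ℝ) < q := by linarith
  obtain ⟨s, hs0, hs2⟩ : ∃ s : ℝ, 0 ≤ s ∧ s ^ 2 = q :=
    ⟨Real.sqrt q, Real.sqrt_nonneg q, Real.sq_sqrt hq0.le⟩
  subst hs2
  rw [Real.sqrt_sq hs0] at hN
  have hs1 : 1 < s := by nlinarith
  have h1 : N - (s ^ 2 + 1) ≤ 2 * s := (abs_le.mp hN).2
  have h2 : -(2 * s) ≤ N - (s ^ 2 + 1) := (abs_le.mp hN).1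
  have hlo : (s - 1) ^ 2 ≤ N := by nlinarith
  have hhi : N ≤ (s + 1) ^ 2 := by nlinarith
  have hD : (0:ℝ) < (s ^ 2) ^ 2 - 1 := by nlinarith
  have hD1 : (0:ℝ) < s ^ 2 - 1 := by nlinarith
  have he1 : (-2) * ((s ^ 2) ^ 2 - 1) + (2 * s ^ 2 - 3) * (s ^ 2 + 1) * N + N ^ 2
      - 2 * s ^ 3 * (((s ^ 2) ^ 2 - 1) + N) < 0 := by
    nlinarith [mul_nonneg (sub_nonneg.mpr hlo) (sub_nonneg.mpr hhi),
      mul_nonneg (show (0:ℝ) ≤ 2 * s ^ 4 - 2 * s ^ 3 + s ^ 2 - 1 by nlinarith)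
        (sub_nonneg.mpr hhi),
      mul_pos (mul_pos (mul_pos (mul_pos (show (0:ℝ) < 2 * s by linarith)
        (pow_pos (show (0:ℝ) < s - 1 by linarith) 2))
        (show (0:ℝ) < s + 1 by linarith))
        (show (0:ℝ) < s ^ 3 + 1 by positivity)) (show (0:ℝ) < 1 by norm_num)]
  have he2 : (0:ℝ) < (-2) * ((s ^ 2) ^ 2 - 1) + (2 * s ^ 2 - 3) * (s ^ 2 + 1) * N + N ^ 2
      + 2 * s ^ 3 * (((s ^ 2) ^ 2 - 1) + N) := by
    nlinarith [sq_nonneg N,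
      mul_nonneg (mul_nonneg (by linarith : (0:ℝ) ≤ s - 1) (by positivity : (0:ℝ) ≤ 2 * s ^ 3 + 4 * s ^ 2 + 3 * s)) hN0.le,
      mul_pos (show (0:ℝ) < s ^ 4 - 1 by nlinarith) (show (0:ℝ) < s ^ 3 - 1 by nlinarith)]
  have key : ((-2) * ((s ^ 2) ^ 2 - 1) + (2 * s ^ 2 - 3) * (s ^ 2 + 1) * N + N ^ 2) ^ 2
      - 4 * (((s ^ 2) ^ 2 - 1) + N) ^ 2 * (s ^ 2) ^ 3 < 0 := by
    have h := mul_neg_of_neg_of_pos he1 he2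
    nlinarith [h]
  have hrw : (-2 + (2 * s ^ 2 - 3) * N / (s ^ 2 - 1) + N ^ 2 / ((s ^ 2) ^ 2 - 1)) ^ 2
      - 4 * (1 + N / ((s ^ 2) ^ 2 - 1)) ^ 2 * (s ^ 2) ^ 3
      = (((-2) * ((s ^ 2) ^ 2 - 1) + (2 * s ^ 2 - 3) * (s ^ 2 + 1) * N + N ^ 2) ^ 2
        - 4 * (((s ^ 2) ^ 2 - 1) + N) ^ 2 * (s ^ 2) ^ 3) / ((s ^ 2) ^ 2 - 1) ^ 2 := by
    have e : (s ^ 2) ^ 2 - 1 = (s ^ 2 - 1) * (s ^ 2 + 1) := by ring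
    have h3 : (0:ℝ) < s ^ 2 + 1 := by positivity
    rw [e]
    field_simp
  rw [hrw]
  exact div_neg_of_neg_of_pos key (by positivity)
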